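/- Let q, r ∈ Δⁿ be probability vectors and X¹,…,Xⁿ, Y¹,…,Yⁿ ∈ ℝᵈ vectors with ‖Xⁱ‖₂ ≤ c and ‖Yⁱ‖₂ ≤ c for all i. Suppose S, T ⊆ {1,…,n} satisfy ∑_{j∈S} qⱼ ≥ δ and ∑_{j∈T} rⱼ ≥ δ with δ ∈ (0,1]. Define p_l := ∑ᵢ qᵢ Xⁱ, p_s := ∑ᵢ rᵢ Yⁱ, p'_l := ∑_{j∈S} (qⱼ / ∑_{k∈S} q_k) Xʲ, and p'_s := ∑_{j∈T} (rⱼ / ∑_{k∈T} r_k) Yʲ. Then ‖p_l − p_s‖₂ ≤ ‖p'_l − p'_s‖₂ + 4(1−δ)c. -/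
import Mathlib

lemma aux_sparse {d n : ℕ} (q : Fin n → ℝ) (hq : ∀ i, 0 ≤ q i) (hq1 : ∑ i, q i = 1)
    (X : Fin n → EuclideanSpace ℝ (Fin d)) (c : ℝ) (hc : 0 ≤ c) (hX : ∀ i, ‖X i‖ ≤ c)
    (S : Finset (Fin n)) (δ : ℝ) (hδ0 : 0 < δ)
    (hS : δ ≤ ∑ j ∈ S, q j) :
    ‖(∑ i, q i • X i) - ∑ j ∈ S, (q j / (∑ k ∈ S, q k)) • X j‖ ≤ 2 * (1 - δ) * c := by
  set Q := ∑ k ∈ S, q k with hQ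
  have hQpos : 0 < Q := lt_of_lt_of_le hδ0 hS
  have hQle : Q ≤ 1 := by
    rw [← hq1]
    exact Finset.sum_le_sum_of_subset_of_nonneg (Finset.subset_univ S) (fun i _ _ => hq i)
  have hcompl : ∑ j ∈ Sᶜ, q j = 1 - Q := by
    have := Finset.sum_compl_add_sum S q
    rw [hq1] at this; linarith
  have h1 : (∑ i, q i • X i) - ∑ j ∈ S, (q j / Q) • X j
      = (∑ j ∈ Sᶜ, q j • X j) + ∑ j ∈ S, (q j - q j / Q) • X j := by
    rw [← Finset.sum_compl_add_sum S (fun i => q i • X i)]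
    simp only [sub_smul, Finset.sum_sub_distrib]
    abel
  rw [h1]
  have hb1 : ‖∑ j ∈ Sᶜ, q j • X j‖ ≤ (1 - Q) * c := by
    calc ‖∑ j ∈ Sᶜ, q j • X j‖ ≤ ∑ j ∈ Sᶜ, ‖q j • X j‖ := norm_sum_le _ _
      _ ≤ ∑ j ∈ Sᶜ, q j * c := by
          refine Finset.sum_le_sum fun j _ => ?_
          rw [norm_smul, Real.norm_eq_abs, abs_of_nonneg (hq j)]
          exact mul_le_mul_of_nonneg_left (hX j) (hq j)
      _ = (1 - Q) * c := by rw [← Finset.sum_mul, hcompl]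
  have hb2 : ‖∑ j ∈ S, (q j - q j / Q) • X j‖ ≤ (1 - Q) * c := by
    calc ‖∑ j ∈ S, (q j - q j / Q) • X j‖ ≤ ∑ j ∈ S, ‖(q j - q j / Q) • X j‖ := norm_sum_le _ _
      _ ≤ ∑ j ∈ S, (q j / Q - q j) * c := by
          refine Finset.sum_le_sum fun j _ => ?_
          rw [norm_smul, Real.norm_eq_abs]
          have h : |q j - q j / Q| = q j / Q - q j := by
            rw [abs_sub_comm]
            refine abs_of_nonneg ?_
            have : q j ≤ q j / Q := by
              rw [le_div_iff₀ hQpos]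
              nlinarith [hq j]
            linarith
          rw [h]
          have : 0 ≤ q j / Q - q j := by
            have : q j ≤ q j / Q := by
              rw [le_div_iff₀ hQpos]; nlinarith [hq j]
            linarith
          exact mul_le_mul_of_nonneg_left (hX j) this
      _ = (1 - Q) * c := by
          rw [← Finset.sum_mul]
          congr 1
          rw [Finset.sum_sub_distrib, ← Finset.sum_div, ← hQ, div_self (ne_of_gt hQpos)]
  calc ‖(∑ j ∈ Sᶜ, q j • X j) + ∑ j ∈ S, (q j - q j / Q) • X j‖
      ≤ ‖∑ j ∈ Sᶜ, q j • X j‖ + ‖∑ j ∈ S, (q j - q j / Q) • X j‖ := norm_add_le _ _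
    _ ≤ (1 - Q) * c + (1 - Q) * c := add_le_add hb1 hb2
    _ ≤ 2 * (1 - δ) * c := by nlinarith

theorem stmt_3 (d n : ℕ) (q r : Fin n → ℝ) (hq : ∀ i, 0 ≤ q i)
    (hq1 : ∑ i, q i = 1) (hr : ∀ i, 0 ≤ r i) (hr1 : ∑ i, r i = 1)
    (X Y : Fin n → EuclideanSpace ℝ (Fin d)) (c : ℝ)
    (hX : ∀ i, ‖X i‖ ≤ c) (hY : ∀ i, ‖Y i‖ ≤ c)
    (S T : Finset (Fin n)) (δ : ℝ) (hδ0 : 0 < δ) (hδ1 : δ ≤ 1)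
    (hS : δ ≤ ∑ j ∈ S, q j) (hT : δ ≤ ∑ j ∈ T, r j) :
    ‖(∑ i, q i • X i) - ∑ i, r i • Y i‖ ≤
      ‖(∑ j ∈ S, (q j / (∑ k ∈ S, q k)) • X j) -
        ∑ j ∈ T, (r j / (∑ k ∈ T, r k)) • Y j‖ + 4 * (1 - δ) * c := by
  have hn : 0 < n := by
    by_contra h
    push_neg at h
    interval_cases n
    simp at hq1
  have hc : 0 ≤ c := le_trans (norm_nonneg _) (hX ⟨0, hn⟩)
  have h1 := aux_sparse q hq hq1 X c hc hX S δ hδ0 hS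
  have h2 := aux_sparse r hr hr1 Y c hc hY T δ hδ0 hT
  set A := ∑ i, q i • X i
  set B := ∑ i, r i • Y i
  set A' := ∑ j ∈ S, (q j / (∑ k ∈ S, q k)) • X j
  set B' := ∑ j ∈ T, (r j / (∑ k ∈ T, r k)) • Y j
  have htri : ‖A - B‖ ≤ ‖A - A'‖ + ‖A' - B'‖ + ‖B' - B‖ := by
    have heq : A - B = (A - A') + (A' - B') + (B' - B) := by abel
    rw [heq]
    exact norm_add₃_le
  rw [norm_sub_rev B'] at htri
  linarith
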